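/- Fix a positive integer T, a real α ∈ [0,1] with αT ≥ 2, a demand bound Wmax > 0, real demands W_t with 0 ≤ W_t < Wmax for all t, an initial stock X_0 ≥ 0, and an arbitrary real sequence (ŵ_t) (the outputs of any demand predictor). Define the cumulative error E_t = ∑_{k=1}^{t} 𝟙[X_k ≤ 0] (with E_0 = 0), the denominator d_t = (t/T)(αT − 2) + 2, and the gain g_t(E) = tan((π/2)·(E+1)/d_t) if d_t > 0 and E + 1 < d_t, and g_t(E) = +∞ otherwise. Let the orders be U_t = Wmax − X_t whenever g_t(E_t) = +∞, and U_t = min( max( ŵ_t + g_t(E_t) − X_t, 0), Wmax − X_t ) otherwise, and let the stock evolve as X_{t+1} = max(0, X_t + U_t − W_t). Then ∑_{t=1}^{T} 𝟙[X_t ≤ 0] ≤ αT; equivalently, the policy is admissible with service level 1 − α: (1/T) ∑_{t=1}^{T} 𝟙[X_t > 0] ≥ 1 − α. -/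

import Mathlib

/-- Theorem 1: the data-driven order policy with nonlinear (tangent) integral
gain is admissible with service level `1 - α`, for any demand predictor `wpred`. -/
theorem policy_admissible
    (T : ℕ) (hT : 0 < T)
    (α : ℝ) (hα0 : 0 ≤ α) (hα1 : α ≤ 1) (hαT : 2 ≤ α * T)
    (Wmax : ℝ) (hWmax : 0 < Wmax)
    (W : ℕ → ℝ) (hW : ∀ t, 0 ≤ W t ∧ W t < Wmax)
    (X : ℕ → ℝ) (hX0 : 0 ≤ X 0)
    (wpred : ℕ → ℝ)
    (U : ℕ → ℝ)
    (E : ℕ → ℕ)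
    (hE : ∀ t, E t = ∑ k ∈ Finset.Icc 1 t, if X k ≤ 0 then 1 else 0)
    (d : ℕ → ℝ)
    (hd : ∀ t, d t = ((t : ℝ) / T) * (α * T - 2) + 2)
    -- the gain `g t (E t)` equals `tan ((π/2) (E t + 1) / d t)` when
    -- `d t > 0` and `E t + 1 < d t`, and `+∞` otherwise; the order is
    -- `Wmax - X t` in the saturated (`+∞`) case and the clipped
    -- prediction-plus-gain order otherwise.
    (hUfin : ∀ t, 0 < d t → ((E t : ℝ) + 1) < d t →
        U t = min (max (wpred t + Real.tan (Real.pi / 2 * (((E t : ℝ) + 1) / d t)) - X t) 0)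
                  (Wmax - X t))
    (hUsat : ∀ t, ¬(0 < d t ∧ ((E t : ℝ) + 1) < d t) → U t = Wmax - X t)
    (hdyn : ∀ t, X (t + 1) = max 0 (X t + U t - W t)) :
    (∑ t ∈ Finset.Icc 1 T, (if X t ≤ 0 then (1 : ℝ) else 0)) ≤ α * T ∧
      (1 / (T : ℝ)) * ∑ t ∈ Finset.Icc 1 T, (if 0 < X t then (1 : ℝ) else 0) ≥ 1 - α := by
  have hT' : (0:ℝ) < T := by exact_mod_cast hT
  have hαT2 : (0:ℝ) ≤ α * T - 2 := by linarith
  have hdge : ∀ t : ℕ, (2:ℝ) ≤ d t := by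
    intro t
    rw [hd]
    have : 0 ≤ ((t:ℝ)/T) * (α * T - 2) :=
      mul_nonneg (div_nonneg (Nat.cast_nonneg t) (Nat.cast_nonneg T)) hαT2
    linarith
  have hdmono : ∀ t : ℕ, d t ≤ d (t+1) := by
    intro t
    rw [hd, hd]
    push_cast
    have h1 : (t:ℝ)/T ≤ ((t:ℝ)+1)/T := by gcongr; linarith
    have := mul_le_mul_of_nonneg_right h1 hαT2
    linarith
  have key : ∀ t, (E t : ℝ) < d t := by
    intro t
    induction t with
    | zero => rw [hE, hd]; simp
    | succ t ih =>
      have hdt := hdge t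
      have hdm := hdmono t
      have hErec : E (t+1) = E t + (if X (t+1) ≤ 0 then 1 else 0) := by
        rw [hE, hE, Finset.sum_Icc_succ_top (Nat.le_add_left 1 t)]
      by_cases h : ((E t : ℝ) + 1) < d t
      · have hle : (E (t+1) : ℝ) ≤ (E t : ℝ) + 1 := by
          rw [hErec]; push_cast; split <;> simp
        linarith
      · have hU := hUsat t (fun hc => h hc.2)
        have hpos : 0 < X (t+1) := by
          rw [hdyn, hU]
          have : 0 < Wmax - W t := by linarith [(hW t).2]
          calc (0:ℝ) < Wmax - W t := this
            _ = X t + (Wmax - X t) - W t := by ring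
            _ ≤ max 0 (X t + (Wmax - X t) - W t) := le_max_right _ _
        have hEeq : E (t+1) = E t := by
          rw [hErec, if_neg (not_le.mpr hpos)]; ring
        rw [hEeq]
        linarith
  have hET : (E T : ℝ) < α * T := by
    have h := key T
    rw [hd, div_self (ne_of_gt hT')] at h
    linarith
  have hsum : (∑ t ∈ Finset.Icc 1 T, (if X t ≤ 0 then (1:ℝ) else 0)) = (E T : ℝ) := by
    rw [hE]
    push_cast
    rfl
  have h2 : ∀ t ∈ Finset.Icc 1 T,
      (if 0 < X t then (1:ℝ) else 0) = 1 - (if X t ≤ 0 then (1:ℝ) else 0) := by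
    intro t _
    by_cases h : X t ≤ 0
    · rw [if_pos h, if_neg (not_lt.mpr h)]; ring
    · rw [if_neg h, if_pos (not_le.mp h)]; ring
  have hsum2 : (∑ t ∈ Finset.Icc 1 T, (if 0 < X t then (1:ℝ) else 0))
      = (T:ℝ) - ∑ t ∈ Finset.Icc 1 T, (if X t ≤ 0 then (1:ℝ) else 0) := by
    rw [Finset.sum_congr rfl h2, Finset.sum_sub_distrib, Finset.sum_const,
      Nat.card_Icc]
    simp
  constructor
  · rw [hsum]; linarith
  · rw [hsum2, hsum, ge_iff_le]
    rw [one_div, inv_mul_eq_div, le_div_iff₀ hT']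
    nlinarith
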